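/- The algebra G(A,B) admits a bialgebra structure with comultiplication Δ(u_{ij}) = Σ_k u_{ik} ⊗ u_{kj}, Δ(D^{±1}) = D^{±1} ⊗ D^{±1}, and counit ε(u_{ij}) = δ_{ij}, ε(D^{±1}) = 1; i.e., these assignments extend to well-defined algebra homomorphisms Δ: G(A,B) → G(A,B) ⊗ G(A,B) and ε: G(A,B) → k respecting the defining relations. -/

import Mathlib

open Matrix

/-- Generators of the algebra `G(A,B)`: the `u i j`, `𝔻`, and `𝔻⁻¹`. -/
inductive GABgen (n : ℕ) : Type
  | u : Fin n → Fin n → GABgen n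
  | D : GABgen n
  | Dinv : GABgen n

/-- The matrix of generators `u` inside the free algebra. -/
noncomputable def GABu (k : Type*) [Field k] (n : ℕ) :
    Matrix (Fin n) (Fin n) (FreeAlgebra k (GABgen n)) :=
  fun i j => FreeAlgebra.ι k (GABgen.u i j)

/-- The defining relations of `G(A,B)`: `uᵀ A u = A 𝔻`, `u B uᵀ = B 𝔻`,
`𝔻 𝔻⁻¹ = 1 = 𝔻⁻¹ 𝔻`. -/
inductive GABrel (k : Type*) [Field k] {n : ℕ} (A B : Matrix (Fin n) (Fin n) k) :
    FreeAlgebra k (GABgen n) → FreeAlgebra k (GABgen n) → Prop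
  | relA (i j : Fin n) : GABrel k A B
      ((((GABu k n)ᵀ * A.map (algebraMap k (FreeAlgebra k (GABgen n))) * GABu k n)) i j)
      (algebraMap k (FreeAlgebra k (GABgen n)) (A i j) * FreeAlgebra.ι k GABgen.D)
  | relB (i j : Fin n) : GABrel k A B
      (((GABu k n * B.map (algebraMap k (FreeAlgebra k (GABgen n))) * (GABu k n)ᵀ)) i j)
      (algebraMap k (FreeAlgebra k (GABgen n)) (B i j) * FreeAlgebra.ι k GABgen.D)
  | relD : GABrel k A B (FreeAlgebra.ι k GABgen.D * FreeAlgebra.ι k GABgen.Dinv) 1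
  | relD' : GABrel k A B (FreeAlgebra.ι k GABgen.Dinv * FreeAlgebra.ι k GABgen.D) 1

/-- The algebra `G(A,B)`, presented by generators `u i j`, `𝔻`, `𝔻⁻¹` and the relations above. -/
noncomputable def GAB (k : Type*) [Field k] {n : ℕ} (A B : Matrix (Fin n) (Fin n) k) : Type _ :=
  RingQuot (GABrel k A B)

noncomputable instance (k : Type*) [Field k] {n : ℕ} (A B : Matrix (Fin n) (Fin n) k) :
    Ring (GAB k A B) := by unfold GAB; infer_instance

noncomputable instance (k : Type*) [Field k] {n : ℕ} (A B : Matrix (Fin n) (Fin n) k) :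
    Algebra k (GAB k A B) := by unfold GAB; infer_instance

/-- The generators `u i j` of `G(A,B)`. -/
noncomputable def GABU (k : Type*) [Field k] {n : ℕ} (A B : Matrix (Fin n) (Fin n) k)
    (i j : Fin n) : GAB k A B :=
  RingQuot.mkAlgHom k (GABrel k A B) (FreeAlgebra.ι k (GABgen.u i j))

/-- The generator `𝔻` of `G(A,B)`. -/
noncomputable def GABD (k : Type*) [Field k] {n : ℕ} (A B : Matrix (Fin n) (Fin n) k) :
    GAB k A B :=
  RingQuot.mkAlgHom k (GABrel k A B) (FreeAlgebra.ι k GABgen.D)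

/-- The generator `𝔻⁻¹` of `G(A,B)`. -/
noncomputable def GABDinv (k : Type*) [Field k] {n : ℕ} (A B : Matrix (Fin n) (Fin n) k) :
    GAB k A B :=
  RingQuot.mkAlgHom k (GABrel k A B) (FreeAlgebra.ι k GABgen.Dinv)

open scoped TensorProduct

theorem sum4_comm {ι M : Type*} [AddCommMonoid M] [Fintype ι]
    (f : ι → ι → ι → ι → M) :
    ∑ y, ∑ x, ∑ l, ∑ m, f y x l m = ∑ l, ∑ m, ∑ y, ∑ x, f y x l m := by
  calc ∑ y, ∑ x, ∑ l, ∑ m, f y x l m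
      = ∑ y, ∑ l, ∑ x, ∑ m, f y x l m :=
        Finset.sum_congr rfl fun y _ => Finset.sum_comm
    _ = ∑ l, ∑ y, ∑ x, ∑ m, f y x l m := Finset.sum_comm
    _ = ∑ l, ∑ y, ∑ m, ∑ x, f y x l m :=
        Finset.sum_congr rfl fun l _ => Finset.sum_congr rfl fun y _ => Finset.sum_comm
    _ = ∑ l, ∑ m, ∑ y, ∑ x, f y x l m :=
        Finset.sum_congr rfl fun l _ => Finset.sum_comm

section
variable {k : Type*} [Field k] {n : ℕ} (A B : Matrix (Fin n) (Fin n) k)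

local notation "Q" => GAB k A B

theorem qrelA (i j : Fin n) :
    ∑ y, ∑ x, GABU k A B x i * algebraMap k Q (A x y) * GABU k A B y j
      = algebraMap k Q (A i j) * GABD k A B := by
  have h := RingQuot.mkAlgHom_rel k (GABrel.relA (A := A) (B := B) i j)
  simp [Matrix.mul_apply, GABu, Matrix.map_apply, Finset.sum_mul, map_sum, _root_.map_mul,
    GABU, GABD, AlgHom.commutes] at h
  exact h

theorem qrelB (i j : Fin n) :
    ∑ y, ∑ x, GABU k A B i x * algebraMap k Q (B x y) * GABU k A B j y
      = algebraMap k Q (B i j) * GABD k A B := by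
  have h := RingQuot.mkAlgHom_rel k (GABrel.relB (A := A) (B := B) i j)
  simp [Matrix.mul_apply, GABu, Matrix.map_apply, Finset.sum_mul, map_sum, _root_.map_mul,
    GABU, GABD, AlgHom.commutes] at h
  exact h

theorem tmm1 (a b c d : Q) : a ⊗ₜ[k] b * c ⊗ₜ[k] d = (a*c) ⊗ₜ[k] (b*d) :=
  @Algebra.TensorProduct.tmul_mul_tmul k Q Q _ _ (_) (_) (_) _ (_) (_) (_) a c b d

theorem tone : (1 : Q) ⊗ₜ[k] (1 : Q) = 1 := rfl

noncomputable def Dmap : FreeAlgebra k (GABgen n) →ₐ[k] (Q ⊗[k] Q) :=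
  FreeAlgebra.lift k fun g => match g with
    | .u i j => ∑ l, GABU k A B i l ⊗ₜ[k] GABU k A B l j
    | .D => GABD k A B ⊗ₜ[k] GABD k A B
    | .Dinv => GABDinv k A B ⊗ₜ[k] GABDinv k A B

theorem Dmap_rel : ∀ ⦃x y⦄, GABrel k A B x y → Dmap A B x = Dmap A B y := by
  intro x y h
  induction h with
  | relA i j =>
    simp only [Dmap, Matrix.mul_apply, Matrix.transpose_apply, Matrix.map_apply, GABu,
      Finset.sum_mul, Finset.mul_sum, map_sum, _root_.map_mul, FreeAlgebra.lift_ι_apply,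
      AlgHom.commutes, Algebra.TensorProduct.algebraMap_apply,
      Algebra.TensorProduct.tmul_mul_tmul, tmm1, mul_one, one_mul]
    rw [sum4_comm]
    simp only [← TensorProduct.sum_tmul]
    simp only [qrelA A B]
    simp only [← Algebra.smul_def, TensorProduct.smul_tmul]
    simp only [← TensorProduct.tmul_sum]
    congr 1
    rw [Algebra.smul_def, ← qrelA A B i j]
    refine Finset.sum_congr rfl fun m _ => Finset.sum_congr rfl fun l _ => ?_
    rw [Algebra.smul_def, ← mul_assoc, Algebra.commutes]
  | relB i j =>
    simp only [Dmap, Matrix.mul_apply, Matrix.transpose_apply, Matrix.map_apply, GABu,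
      Finset.sum_mul, Finset.mul_sum, map_sum, _root_.map_mul, FreeAlgebra.lift_ι_apply,
      AlgHom.commutes, Algebra.TensorProduct.algebraMap_apply,
      Algebra.TensorProduct.tmul_mul_tmul, tmm1, mul_one, one_mul]
    have swap : ∀ (c : k) (a b z : Q), (a * algebraMap k Q c * b) ⊗ₜ[k] z
        = (a * b) ⊗ₜ[k] (c • z) := by
      intro c a b z
      rw [← Algebra.commutes, mul_assoc, ← Algebra.smul_def, TensorProduct.smul_tmul]
    simp only [swap]
    rw [sum4_comm]
    simp only [← TensorProduct.tmul_sum]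
    have hq : ∀ l m, ∑ y, ∑ x, B x y • (GABU k A B l x * GABU k A B m y)
        = algebraMap k Q (B l m) * GABD k A B := by
      intro l m
      rw [← qrelB A B l m]
      exact Finset.sum_congr rfl fun y _ => Finset.sum_congr rfl fun x _ => by
        rw [Algebra.smul_def, ← mul_assoc, Algebra.commutes]
    simp only [hq]
    simp only [← Algebra.smul_def, TensorProduct.tmul_smul, TensorProduct.smul_tmul']
    simp only [← TensorProduct.sum_tmul]
    congr 1
    rw [Algebra.smul_def, ← qrelB A B i j]
    exact Finset.sum_congr rfl fun m _ => Finset.sum_congr rfl fun l _ => by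
      rw [Algebra.smul_def, ← mul_assoc, Algebra.commutes]
  | relD =>
    have h : GABD k A B * GABDinv k A B = 1 := by
      have h2 := RingQuot.mkAlgHom_rel k (GABrel.relD (A := A) (B := B))
      simp [GABD, GABDinv, _root_.map_mul] at h2
      exact h2
    simp only [Dmap, _root_.map_mul, _root_.map_one, FreeAlgebra.lift_ι_apply,
      Algebra.TensorProduct.tmul_mul_tmul, tmm1, h, Algebra.TensorProduct.one_def, tone]
  | relD' =>
    have h : GABDinv k A B * GABD k A B = 1 := by
      have h2 := RingQuot.mkAlgHom_rel k (GABrel.relD' (A := A) (B := B))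
      simp [GABD, GABDinv, _root_.map_mul] at h2
      exact h2
    simp only [Dmap, _root_.map_mul, _root_.map_one, FreeAlgebra.lift_ι_apply,
      Algebra.TensorProduct.tmul_mul_tmul, tmm1, h, Algebra.TensorProduct.one_def, tone]

noncomputable def Emap (k : Type*) [Field k] (n : ℕ) : FreeAlgebra k (GABgen n) →ₐ[k] k :=
  FreeAlgebra.lift k fun g => match g with
    | .u i j => if i = j then 1 else 0
    | .D => 1
    | .Dinv => 1

theorem Emap_rel : ∀ ⦃x y⦄, GABrel k A B x y → Emap k n x = Emap k n y := by
  intro x y h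
  induction h with
  | relA i j =>
    simp [Emap, Matrix.mul_apply, Matrix.transpose_apply, Matrix.map_apply, GABu,
      Finset.sum_mul, Finset.mul_sum, map_sum, _root_.map_mul, FreeAlgebra.lift_ι_apply,
      AlgHom.commutes, ite_mul, mul_ite, Finset.sum_ite_eq, Finset.sum_ite_eq']
  | relB i j =>
    simp [Emap, Matrix.mul_apply, Matrix.transpose_apply, Matrix.map_apply, GABu,
      Finset.sum_mul, Finset.mul_sum, map_sum, _root_.map_mul, FreeAlgebra.lift_ι_apply,
      AlgHom.commutes, ite_mul, mul_ite, Finset.sum_ite_eq, Finset.sum_ite_eq']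
  | relD => simp [Emap, _root_.map_mul, FreeAlgebra.lift_ι_apply]
  | relD' => simp [Emap, _root_.map_mul, FreeAlgebra.lift_ι_apply]

end

theorem stmt2 {k : Type*} [Field k] {n : ℕ} (hn : 2 ≤ n)
    (A B : Matrix (Fin n) (Fin n) k) (hA : IsUnit A) (hB : IsUnit B) :
    (∃ Δ : GAB k A B →ₐ[k] (GAB k A B ⊗[k] GAB k A B),
      (∀ i j, Δ (GABU k A B i j) = ∑ l, GABU k A B i l ⊗ₜ[k] GABU k A B l j) ∧
      Δ (GABD k A B) = GABD k A B ⊗ₜ[k] GABD k A B ∧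
      Δ (GABDinv k A B) = GABDinv k A B ⊗ₜ[k] GABDinv k A B) ∧
    (∃ ε : GAB k A B →ₐ[k] k,
      (∀ i j, ε (GABU k A B i j) = if i = j then 1 else 0) ∧
      ε (GABD k A B) = 1 ∧ ε (GABDinv k A B) = 1) := by
  constructor
  · refine ⟨RingQuot.liftAlgHom k ⟨Dmap A B, Dmap_rel A B⟩, fun i j => ?_, ?_, ?_⟩
    · calc (RingQuot.liftAlgHom k ⟨Dmap A B, Dmap_rel A B⟩) (GABU k A B i j)
          = Dmap A B (FreeAlgebra.ι k (GABgen.u i j)) :=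
            RingQuot.liftAlgHom_mkAlgHom_apply _ _ _ _
        _ = ∑ l, GABU k A B i l ⊗ₜ[k] GABU k A B l j := by
            simp [Dmap, FreeAlgebra.lift_ι_apply]
    · calc (RingQuot.liftAlgHom k ⟨Dmap A B, Dmap_rel A B⟩) (GABD k A B)
          = Dmap A B (FreeAlgebra.ι k GABgen.D) :=
            RingQuot.liftAlgHom_mkAlgHom_apply _ _ _ _
        _ = GABD k A B ⊗ₜ[k] GABD k A B := by simp [Dmap, FreeAlgebra.lift_ι_apply]
    · calc (RingQuot.liftAlgHom k ⟨Dmap A B, Dmap_rel A B⟩) (GABDinv k A B)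
          = Dmap A B (FreeAlgebra.ι k GABgen.Dinv) :=
            RingQuot.liftAlgHom_mkAlgHom_apply _ _ _ _
        _ = GABDinv k A B ⊗ₜ[k] GABDinv k A B := by simp [Dmap, FreeAlgebra.lift_ι_apply]
  · refine ⟨RingQuot.liftAlgHom k ⟨Emap k n, Emap_rel A B⟩, fun i j => ?_, ?_, ?_⟩
    · calc (RingQuot.liftAlgHom k ⟨Emap k n, Emap_rel A B⟩) (GABU k A B i j)
          = Emap k n (FreeAlgebra.ι k (GABgen.u i j)) :=
            RingQuot.liftAlgHom_mkAlgHom_apply _ _ _ _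
        _ = if i = j then 1 else 0 := by simp [Emap, FreeAlgebra.lift_ι_apply]
    · calc (RingQuot.liftAlgHom k ⟨Emap k n, Emap_rel A B⟩) (GABD k A B)
          = Emap k n (FreeAlgebra.ι k GABgen.D) :=
            RingQuot.liftAlgHom_mkAlgHom_apply _ _ _ _
        _ = 1 := by simp [Emap, FreeAlgebra.lift_ι_apply]
    · calc (RingQuot.liftAlgHom k ⟨Emap k n, Emap_rel A B⟩) (GABDinv k A B)
          = Emap k n (FreeAlgebra.ι k GABgen.Dinv) :=
            RingQuot.liftAlgHom_mkAlgHom_apply _ _ _ _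
        _ = 1 := by simp [Emap, FreeAlgebra.lift_ι_apply]
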